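/- A string T of length n has at most n-1 left-maximal repeats, where a left-maximal repeat is a substring W occurring at least twice such that at least two distinct characters a satisfy that aW is a substring of T. -/

import Mathlib

/-- Number of occurrences (starting positions) of `W` in `T`; positions range over
`0..T.length` so that the empty string is counted `T.length + 1` times. -/
def numOcc {α : Type*} [DecidableEq α] (W T : List α) : ℕ :=
  (List.range (T.length + 1)).countP (fun p => decide (W <+: T.drop p))

/-- `W` is a left-maximal repeat of `T`: it occurs at least twice in `T`, and at least two
distinct characters `a` satisfy that `a :: W` is a substring of `T`. -/
def LeftMaximalRepeat {α : Type*} [DecidableEq α] (W T : List α) : Prop :=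
  W <:+: T ∧ 2 ≤ numOcc W T ∧
    ∃ a b : α, a ≠ b ∧ (a :: W) <:+: T ∧ (b :: W) <:+: T

section Aux

variable {α : Type*} [DecidableEq α]

/-- End positions of occurrences of `W` in `T`. -/
def Lset (T W : List α) : Finset ℕ :=
  (Finset.Icc 1 T.length).filter (fun e => W <:+ T.take e)

/-- Two end positions of `W` are "similar" if they are equal or have the same
preceding character. -/
def simR (T W : List α) (e e' : ℕ) : Prop :=
  e = e' ∨ (W.length + 1 ≤ e ∧ W.length + 1 ≤ e' ∧
    T[e - W.length - 1]? = T[e' - W.length - 1]?)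

instance (T W : List α) (e e' : ℕ) : Decidable (simR T W e e') := by
  unfold simR; infer_instance

/-- The minimal end position of `W`. -/
def mm (T W : List α) : ℕ :=
  if h : (Lset T W).Nonempty then (Lset T W).min' h else 0

/-- End positions not similar to the minimal one. -/
def Bset (T W : List α) : Finset ℕ :=
  (Lset T W).filter (fun e => ¬ simR T W e (mm T W))

/-- The assigned position of `W`. -/
def ff (T W : List α) : ℕ :=
  if h : (Bset T W).Nonempty then (Bset T W).min' h else 0

lemma mem_Lset {T W : List α} {e : ℕ} :
    e ∈ Lset T W ↔ (1 ≤ e ∧ e ≤ T.length) ∧ W <:+ T.take e := by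
  simp [Lset, Finset.mem_filter, Finset.mem_Icc]

lemma exists_occ {T W : List α} {a : α} (h : (a :: W) <:+: T) :
    ∃ e ∈ Lset T W, W.length + 1 ≤ e ∧ T[e - W.length - 1]? = some a := by
  obtain ⟨s, t, hst⟩ := h
  refine ⟨s.length + W.length + 1, ?_, by omega, ?_⟩
  · rw [mem_Lset]
    have htake : T.take (s.length + W.length + 1) = s ++ a :: W := by
      rw [← hst]
      exact List.take_left' (by simp; omega)
    refine ⟨⟨by omega, ?_⟩, ?_⟩
    · rw [← hst]; simp
    · rw [htake]
      exact (List.suffix_cons a W).trans (List.suffix_append s (a :: W))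
  · have : s.length + W.length + 1 - W.length - 1 = s.length := by omega
    rw [this, ← hst, List.append_assoc,
      List.getElem?_append_right (le_refl s.length)]
    simp

lemma char_of_suffix {T W : List α} {d : α} {e : ℕ} (he : e ≤ T.length)
    (h : (d :: W) <:+ T.take e) :
    W.length + 1 ≤ e ∧ T[e - W.length - 1]? = some d := by
  obtain ⟨s, hs⟩ := h
  have hlen : (T.take e).length = e := by simp [he]
  have hs' : s.length + (W.length + 1) = e := by
    rw [← hlen, ← hs]; simp
  refine ⟨by omega, ?_⟩
  have h1 : (T.take e)[s.length]? = some d := by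
    rw [← hs, List.getElem?_append_right (le_refl s.length)]
    simp
  rw [List.getElem?_take] at h1
  have hlt : s.length < e := by omega
  rw [if_pos hlt] at h1
  have : e - W.length - 1 = s.length := by omega
  rw [this]; exact h1

lemma exists_cons_suffix {W W' : List α} (h : W <:+ W') (hne : W ≠ W') :
    ∃ d, (d :: W) <:+ W' := by
  obtain ⟨V, hV⟩ := h
  have hV0 : V ≠ [] := by rintro rfl; simp at hV; exact hne hV
  obtain ⟨V₀, d, rfl⟩ := V.eq_nil_or_concat.resolve_left hV0
  exact ⟨d, V₀, by rw [← hV]; simp⟩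

lemma suffix_of_mem_mem {T W W' : List α} {e : ℕ} (h : e ∈ Lset T W)
    (h' : e ∈ Lset T W') (hl : W.length ≤ W'.length) : W <:+ W' := by
  rw [mem_Lset] at h h'
  rcases List.suffix_or_suffix_of_suffix h.2 h'.2 with hs | hs
  · exact hs
  · have : W' = W := hs.eq_of_length (le_antisymm hs.length_le hl)
    rw [this]

lemma Lset_subset {T W W' : List α} (h : W <:+ W') : Lset T W' ⊆ Lset T W := by
  intro e he
  rw [mem_Lset] at he ⊢
  exact ⟨he.1, h.trans he.2⟩

variable {T : List α}

lemma Lset_nonempty {W : List α} (hW : LeftMaximalRepeat W T) :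
    (Lset T W).Nonempty := by
  obtain ⟨-, -, a, b, hab, ha, hb⟩ := hW
  obtain ⟨e, he, -⟩ := exists_occ ha
  exact ⟨e, he⟩

lemma mm_spec {W : List α} (hW : LeftMaximalRepeat W T) :
    mm T W ∈ Lset T W ∧ ∀ x ∈ Lset T W, mm T W ≤ x := by
  have h := Lset_nonempty hW
  rw [mm, dif_pos h]
  exact ⟨Finset.min'_mem _ h, fun x hx => Finset.min'_le _ x hx⟩

lemma mem_Bset {T W : List α} {e : ℕ} :
    e ∈ Bset T W ↔ e ∈ Lset T W ∧ ¬ simR T W e (mm T W) := by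
  rw [Bset]; exact Finset.mem_filter

lemma Bset_nonempty {W : List α} (hW : LeftMaximalRepeat W T) :
    (Bset T W).Nonempty := by
  obtain ⟨-, -, a, b, hab, ha, hb⟩ := hW
  obtain ⟨ea, hea, hea1, hea2⟩ := exists_occ ha
  obtain ⟨eb, heb, heb1, heb2⟩ := exists_occ hb
  have hne : ea ≠ eb := by
    intro h; rw [h, heb2] at hea2; exact hab (Option.some_injective _ hea2.symm)
  have hkey : ¬ (simR T W ea (mm T W) ∧ simR T W eb (mm T W)) := by
    rintro ⟨ha' | ⟨-, -, ha'⟩, hb' | ⟨-, -, hb'⟩⟩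
    · exact hne (ha'.trans hb'.symm)
    · rw [← ha', hea2, heb2] at hb'
      exact hab (Option.some_injective _ hb'.symm)
    · rw [← hb', heb2, hea2] at ha'
      exact hab (Option.some_injective _ ha')
    · rw [hea2] at ha'
      rw [heb2, ← ha'] at hb'
      exact hab (Option.some_injective _ hb'.symm)
  by_cases hsa : simR T W ea (mm T W)
  · exact ⟨eb, mem_Bset.2 ⟨heb, fun hsb => hkey ⟨hsa, hsb⟩⟩⟩
  · exact ⟨ea, mem_Bset.2 ⟨hea, hsa⟩⟩

lemma ff_spec {W : List α} (hW : LeftMaximalRepeat W T) :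
    ff T W ∈ Lset T W ∧ ¬ simR T W (ff T W) (mm T W) ∧
      ∀ x ∈ Lset T W, ¬ simR T W x (mm T W) → ff T W ≤ x := by
  have h := Bset_nonempty hW
  rw [ff, dif_pos h]
  have hmem := mem_Bset.1 (Finset.min'_mem _ h)
  refine ⟨hmem.1, hmem.2, fun x hx hx2 => ?_⟩
  exact Finset.min'_le _ x (mem_Bset.2 ⟨hx, hx2⟩)

lemma ff_ge_two {W : List α} (hW : LeftMaximalRepeat W T) : 2 ≤ ff T W := by
  obtain ⟨hf1, hf2, -⟩ := ff_spec hW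
  obtain ⟨hm1, hm2⟩ := mm_spec hW
  have h1 : 1 ≤ mm T W := ((mem_Lset.1 hm1).1).1
  have h2 : mm T W ≤ ff T W := hm2 _ hf1
  have h3 : ff T W ≠ mm T W := fun h => hf2 (Or.inl h)
  omega

lemma ff_le {W : List α} (hW : LeftMaximalRepeat W T) : ff T W ≤ T.length :=
  ((mem_Lset.1 (ff_spec hW).1).1).2

/-- Key asymmetric step of the injectivity argument. -/
lemma key {W W' : List α} (hW : LeftMaximalRepeat W T)
    (hW' : LeftMaximalRepeat W' T) (hEq : ff T W = ff T W')
    (hlen : W.length < W'.length) : False := by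
  obtain ⟨hf1, hf2, hf3⟩ := ff_spec hW
  obtain ⟨hf1', hf2', hf3'⟩ := ff_spec hW'
  obtain ⟨hm1, hm2⟩ := mm_spec hW
  obtain ⟨hm1', hm2'⟩ := mm_spec hW'
  rw [← hEq] at hf1' hf2'
  set e := ff T W with hedef
  -- W is a proper suffix of W'
  have hsuf : W <:+ W' := suffix_of_mem_mem hf1 hf1' (le_of_lt hlen)
  have hne : W ≠ W' := fun h => by rw [h] at hlen; omega
  obtain ⟨d, hd⟩ := exists_cons_suffix hsuf hne
  -- every element of Lset T W' has preceding character d w.r.t. W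
  have hchar : ∀ x ∈ Lset T W', W.length + 1 ≤ x ∧ T[x - W.length - 1]? = some d := by
    intro x hx
    rw [mem_Lset] at hx
    exact char_of_suffix hx.1.2 (hd.trans hx.2)
  have hce := hchar e hf1'
  have hcm' := hchar (mm T W') hm1'
  -- mm T W' belongs to Bset T W
  have hm'B : ¬ simR T W (mm T W') (mm T W) := by
    rintro (h | ⟨h1, h2, h3⟩)
    · apply hf2
      exact Or.inr ⟨hce.1, by omega, by rw [hce.2, ← h, hcm'.2]⟩
    · apply hf2
      exact Or.inr ⟨hce.1, h2, by rw [hce.2, ← h3, hcm'.2]⟩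
  have hle : e ≤ mm T W' := hf3 _ (Lset_subset hsuf hm1') hm'B
  -- but e is in Bset T W', so e ≠ mm T W' and mm T W' ≤ e
  have hne' : e ≠ mm T W' := fun h => hf2' (Or.inl h)
  have hge : mm T W' ≤ e := hm2' _ hf1'
  omega

lemma ff_injOn : Set.InjOn (ff T) {W | LeftMaximalRepeat W T} := by
  intro W hW W' hW' hEq
  rcases lt_trichotomy W.length W'.length with h | h | h
  · exact absurd (key hW hW' hEq h) id
  · obtain ⟨hf1, -, -⟩ := ff_spec hW
    obtain ⟨hf1', -, -⟩ := ff_spec hW'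
    rw [← hEq] at hf1'
    exact suffix_of_mem_mem hf1 hf1' (le_of_eq h) |>.eq_of_length h
  · exact absurd (key hW' hW hEq.symm h) id

end Aux

/-- A string of length `n ≥ 1` over a finite alphabet has at most `n - 1` left-maximal
repeats. -/
theorem leftMaximalRepeats_card_le {α : Type*} [DecidableEq α] [Fintype α]
    (T : List α) (hn : 1 ≤ T.length) :
    {W : List α | LeftMaximalRepeat W T}.Finite ∧
    {W : List α | LeftMaximalRepeat W T}.ncard ≤ T.length - 1 := by
  set S : Set (List α) := {W | LeftMaximalRepeat W T} with hS
  have hinj : Set.InjOn (ff T) S := ff_injOn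
  have hsub : ff T '' S ⊆ ↑(Finset.Icc 2 T.length) := by
    rintro x ⟨W, hW, rfl⟩
    simp only [Finset.coe_Icc, Set.mem_Icc]
    exact ⟨ff_ge_two hW, ff_le hW⟩
  have hfin_img : (ff T '' S).Finite :=
    Set.Finite.subset (Finset.Icc 2 T.length).finite_toSet hsub
  have hfin : S.Finite := Set.Finite.of_finite_image hfin_img hinj
  refine ⟨hfin, ?_⟩
  calc S.ncard = (ff T '' S).ncard := (Set.ncard_image_of_injOn hinj).symm
    _ ≤ (↑(Finset.Icc 2 T.length) : Set ℕ).ncard :=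
        Set.ncard_le_ncard hsub (Finset.Icc 2 T.length).finite_toSet
    _ = T.length - 1 := by
        rw [Set.ncard_coe_finset, Nat.card_Icc]; omega
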